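/- Let R(t) be a rational function over ℂ whose poles lie only among roots of unity (in particular R has no pole at 0 and is proper or can be split off a polynomial part). Write R = R_pol + R_neg where R_pol is a polynomial and R_neg is a rational function of negative degree. Then the Taylor series of R at 0 admits a periodic constant, and this periodic constant equals R_pol(1). -/

import Mathlib

open BigOperators Polynomial Finset

lemma aux_prod_dvd (A : Polynomial ℂ) (s : Multiset ℂ)
    (h : ∀ z ∈ s, (X - C z) ∣ A) :
    (s.map fun z => X - C z).prod ∣ A ^ Multiset.card s := by
  induction s using Multiset.induction with
  | empty => simp
  | cons z s ih =>
    simp only [Multiset.map_cons, Multiset.prod_cons, Multiset.card_cons, pow_succ]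
    exact mul_comm (A ^ Multiset.card s) A ▸ mul_dvd_mul (h z (Multiset.mem_cons_self z s))
      (ih fun w hw => h w (Multiset.mem_cons_of_mem hw))

lemma aux_one_sub_pow {R : Type*} [CommRing R] (x : R) (E : ℕ) :
    (1 - x) ^ E = ∑ j ∈ Finset.range (E+1), (-1)^j * (E.choose j : R) * x^j := by
  rw [sub_pow, ← Finset.sum_range_reflect]
  apply Finset.sum_congr rfl
  intro j hj
  simp only [Finset.mem_range] at hj
  have hjE : j ≤ E := by omega
  have h1 : E + 1 - 1 - j = E - j := by omega
  have h2 : E - (E - j) = j := by omega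
  have h3 : (-1 : R)^(E - j + E) = (-1)^j := by
    have : E - j + E = j + 2*(E - j) := by omega
    rw [this, pow_add, pow_mul]; simp
  rw [h1, h2, h3, Nat.choose_symm hjE]; ring

lemma pascal_step (F : ℕ) (u : ℕ → ℂ) :
    ∑ j ∈ Finset.range (F+2), (-1)^j * (((F+1).choose j : ℕ) : ℂ) * u j
      = ∑ j ∈ Finset.range (F+1), (-1)^j * ((F.choose j : ℕ) : ℂ) * (u j - u (j+1)) := by
  have tele := Finset.sum_range_sub' (fun j => (-1:ℂ)^j * ((F.choose j : ℕ) : ℂ) * u j) (F+1)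
  simp only [Nat.choose_succ_self, Nat.cast_zero, mul_zero, zero_mul, sub_zero, pow_zero,
    Nat.choose_zero_right, Nat.cast_one, one_mul, mul_one] at tele
  rw [Finset.sum_sub_distrib] at tele
  rw [Finset.sum_range_succ']
  have e1 : ∀ j ∈ Finset.range (F+1),
      (-1:ℂ)^(j+1) * (((F+1).choose (j+1) : ℕ) : ℂ) * u (j+1)
        = (-((-1:ℂ)^j * ((F.choose j : ℕ) : ℂ) * u (j+1)))
          + ((-1:ℂ)^(j+1) * ((F.choose (j+1) : ℕ) : ℂ) * u (j+1)) := by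
    intro j _
    rw [Nat.choose_succ_succ]
    push_cast
    ring
  rw [Finset.sum_congr rfl e1, Finset.sum_add_distrib]
  have e2 : ∑ j ∈ Finset.range (F+1), (-1:ℂ)^j * ((F.choose j : ℕ) : ℂ) * (u j - u (j+1))
      = ∑ j ∈ Finset.range (F+1), ((-1:ℂ)^j * ((F.choose j : ℕ) : ℂ) * u j)
        - ∑ j ∈ Finset.range (F+1), ((-1:ℂ)^j * ((F.choose j : ℕ) : ℂ) * u (j+1)) := by
    rw [← Finset.sum_sub_distrib]
    apply Finset.sum_congr rfl; intro j _; ring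
  rw [e2, Finset.sum_neg_distrib]
  simp only [pow_zero, Nat.choose_zero_right, Nat.cast_one, one_mul, mul_one]
  linear_combination -tele

lemma aux_findiff (F : ℕ) (Q : Polynomial ℂ) (hQ : Q.degree < (F : ℕ)) (x : ℂ) :
    ∑ j ∈ Finset.range (F+1), (-1)^j * ((F.choose j : ℕ) : ℂ) * Q.eval (x + j) = 0 := by
  induction F generalizing Q x with
  | zero =>
    have hQ0 : Q = 0 := by
      rw [← Polynomial.degree_eq_bot]
      simpa using hQ
    simp [hQ0]
  | succ F ih =>
    have key := pascal_step F (fun j => Q.eval (x + j))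
    rw [key]
    by_cases hQz : Q = 0
    · simp [hQz]
    set R := Q - Q.comp (X + 1) with hR
    have hq1 : ((X : Polynomial ℂ) + 1).natDegree = 1 := by
      simpa using Polynomial.natDegree_X_add_C (1:ℂ)
    have hlcq : ((X : Polynomial ℂ) + 1).leadingCoeff = 1 := by
      have := Polynomial.monic_X_add_C (1:ℂ)
      simpa [Polynomial.Monic] using this
    have hlc : (Q.comp (X + 1)).leadingCoeff = Q.leadingCoeff := by
      rw [Polynomial.leadingCoeff_comp (by rw [hq1]; exact one_ne_zero), hlcq, one_pow, mul_one]
    have hcompne : Q.comp (X + 1) ≠ 0 := by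
      intro hc
      apply hQz
      rw [← Polynomial.leadingCoeff_eq_zero, ← hlc, hc, Polynomial.leadingCoeff_zero]
    have hcomp : (Q.comp (X + 1)).degree = Q.degree := by
      rw [Polynomial.degree_eq_natDegree hcompne, Polynomial.degree_eq_natDegree hQz,
        Polynomial.natDegree_comp, hq1, mul_one]
    have hdeg : R.degree < (F : ℕ) := by
      have h1 : R.degree < Q.degree := Polynomial.degree_sub_lt hcomp.symm hQz hlc.symm
      have h2 : Q.degree ≤ (F : ℕ) := by
        have hn : Q.natDegree < F + 1 := (Polynomial.natDegree_lt_iff_degree_lt hQz).mpr hQ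
        exact Polynomial.degree_le_natDegree.trans (by exact_mod_cast Nat.lt_succ_iff.mp hn)
      exact lt_of_lt_of_le h1 h2
    have hRev : ∀ j : ℕ, R.eval (x + j) = Q.eval (x + j) - Q.eval (x + j + 1) := by
      intro j
      simp [hR, Polynomial.eval_comp]
    have := ih R hdeg x
    rw [← this]
    apply Finset.sum_congr rfl
    intro j _
    rw [hRev j]
    push_cast
    ring

theorem stmt7 (num den Rpol rem : Polynomial ℂ) (hden : den ≠ 0)
    (hroots : ∀ z : ℂ, den.IsRoot z → ∃ m : ℕ, 0 < m ∧ z ^ m = 1)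
    (hdiv : num = Rpol * den + rem) (hdeg : rem.degree < den.degree)
    (a : ℕ → ℂ)
    (ha : PowerSeries.mk a * (den : PowerSeries ℂ) = (num : PowerSeries ℂ)) :
    ∃ (p : ℕ) (P : Polynomial ℂ), 0 < p ∧
      (∀ n : ℕ, 1 ≤ n → ∑ i ∈ Finset.range (p * n), a i = P.eval (n : ℂ)) ∧
      P.eval 0 = Rpol.eval 1 := by
  classical
  set E : ℕ := den.natDegree + 1 with hE
  -- choose exponent p
  set m : ℂ → ℕ := fun z => if hz : den.IsRoot z then (hroots z hz).choose else 1 with hm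
  have hm_pos : ∀ z, 0 < m z := by
    intro z
    by_cases hz : den.IsRoot z
    · simp only [hm, dif_pos hz]
      exact (hroots z hz).choose_spec.1
    · have h1 : m z = 1 := by simp only [hm]; rw [dif_neg hz]
      simp [h1]
  have hm_root : ∀ z, den.IsRoot z → z ^ (m z) = 1 := by
    intro z hz
    simp only [hm, dif_pos hz]
    exact (hroots z hz).choose_spec.2
  set p0 : ℕ := ∏ z ∈ den.roots.toFinset, m z with hp0
  have hp0_pos : 0 < p0 := Finset.prod_pos fun z _ => hm_pos z
  have hz_p0 : ∀ z ∈ den.roots, z ^ p0 = 1 := by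
    intro z hz
    obtain ⟨k, hk⟩ := Finset.dvd_prod_of_mem m (Multiset.mem_toFinset.2 hz)
    rw [hp0, hk, pow_mul, hm_root z (Polynomial.isRoot_of_mem_roots hz), one_pow]
  have hdvd2 : den ∣ ((X : Polynomial ℂ)^p0 - 1)^E := by
    have hsplit := Polynomial.Splits.eq_prod_roots
      (IsAlgClosed.splits den)
    have hdvd1 : (den.roots.map fun z => X - C z).prod ∣ ((X : Polynomial ℂ)^p0 - 1)^(Multiset.card den.roots) :=
      aux_prod_dvd _ _ (fun z hz => (Polynomial.dvd_iff_isRoot).2 (by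
        simp [Polynomial.IsRoot, hz_p0 z hz]))
    have hcard : Multiset.card den.roots ≤ E := (Polynomial.card_roots' den).trans (Nat.le_succ _)
    obtain ⟨w, hw⟩ := hdvd1.trans (pow_dvd_pow _ hcard)
    refine ⟨C (den.leadingCoeff)⁻¹ * w, ?_⟩
    have hlc : den.leadingCoeff ≠ 0 := Polynomial.leadingCoeff_ne_zero.2 hden
    calc ((X : Polynomial ℂ)^p0 - 1)^E = (den.roots.map fun z => X - C z).prod * w := hw
    _ = (C den.leadingCoeff * (den.roots.map fun z => X - C z).prod) * (C (den.leadingCoeff)⁻¹ * w) := by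
        rw [mul_mul_mul_comm, ← Polynomial.C_mul, mul_inv_cancel₀ hlc, Polynomial.C_1, one_mul]
    _ = den * (C (den.leadingCoeff)⁻¹ * w) := by rw [← hsplit]
  set p : ℕ := p0 * (Rpol.natDegree + 1) with hp
  have hp_pos : 0 < p := Nat.mul_pos hp0_pos (Nat.succ_pos _)
  have hRdeg : Rpol.natDegree < p := by
    calc Rpol.natDegree < Rpol.natDegree + 1 := Nat.lt_succ_self _
    _ ≤ p0 * (Rpol.natDegree + 1) := Nat.le_mul_of_pos_left _ hp0_pos
  have hdvd3 : den ∣ ((X : Polynomial ℂ)^p - 1)^E := by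
    refine hdvd2.trans (pow_dvd_pow_of_dvd ?_ E)
    have := sub_dvd_pow_sub_pow ((X : Polynomial ℂ)^p0) 1 (Rpol.natDegree + 1)
    simpa [← pow_mul, ← hp] using this
  obtain ⟨h1, hh1⟩ := hdvd3
  set h : Polynomial ℂ := (-1)^E * h1 with hhdef
  have hhden : den * h = (1 - (X : Polynomial ℂ)^p)^E := by
    rw [hhdef]
    calc den * ((-1)^E * h1) = (-1)^E * (den * h1) := by ring
    _ = (-1)^E * ((X : Polynomial ℂ)^p - 1)^E := by rw [← hh1]
    _ = (1 - (X : Polynomial ℂ)^p)^E := by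
        rw [← mul_pow]
        congr 1
        ring
  -- power series identity
  have hps : PowerSeries.mk a * (((1 - (X : Polynomial ℂ)^p)^E : Polynomial ℂ) : PowerSeries ℂ)
      = ((num * h : Polynomial ℂ) : PowerSeries ℂ) := by
    rw [← hhden, Polynomial.coe_mul, Polynomial.coe_mul, ← mul_assoc, ha,
      ← Polynomial.coe_mul, ← Polynomial.coe_mul, ← hhdef]
  set g : Polynomial ℂ := num * h with hg
  -- degree facts
  have hnd1 : ((X : Polynomial ℂ)^p - 1).natDegree = p := by
    simpa using Polynomial.natDegree_X_pow_sub_C (n := p) (r := (1:ℂ))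
  have hone_nd : ((1 : Polynomial ℂ) - X^p).natDegree = p := by
    rw [show ((1 : Polynomial ℂ) - X^p) = -((X : Polynomial ℂ)^p - 1) by ring,
      Polynomial.natDegree_neg, hnd1]
  have hone_ne : ((1 : Polynomial ℂ) - X^p) ≠ 0 := by
    intro hc
    rw [hc, Polynomial.natDegree_zero] at hone_nd
    omega
  have hnd_pow : (((1 : Polynomial ℂ) - X^p)^E).natDegree = p * E := by
    rw [Polynomial.natDegree_pow, hone_nd, mul_comm]
  have hh_ne : h ≠ 0 := by
    intro hc
    rw [hc, mul_zero] at hhden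
    exact (pow_ne_zero E hone_ne) hhden.symm
  have hndsum : den.natDegree + h.natDegree = p * E := by
    rw [← Polynomial.natDegree_mul hden hh_ne, hhden, hnd_pow]
  have hnum_deg : num.natDegree ≤ Rpol.natDegree + den.natDegree := by
    rw [hdiv]
    refine (Polynomial.natDegree_add_le _ _).trans (max_le (Polynomial.natDegree_mul_le) ?_)
    have : rem.natDegree ≤ den.natDegree := Polynomial.natDegree_le_natDegree (le_of_lt hdeg)
    omega
  have hg_deg : g.natDegree < p * (E + 1) := by
    have h1 : g.natDegree ≤ num.natDegree + h.natDegree := Polynomial.natDegree_mul_le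
    rw [Nat.mul_succ]
    omega
  -- Fact 1
  have fact1 : ∀ n r : ℕ, E ≤ n →
      ∑ j ∈ Finset.range (E+1), (-1)^j * ((E.choose j : ℕ) : ℂ) * a (p*(n-j)+r)
        = g.coeff (p*n+r) := by
    intro n r hn
    have hcoe_expand : (((1 - (X : Polynomial ℂ)^p)^E : Polynomial ℂ) : PowerSeries ℂ)
        = (1 - (PowerSeries.X : PowerSeries ℂ)^p)^E := by
      rw [Polynomial.coe_pow, Polynomial.coe_sub, Polynomial.coe_one, Polynomial.coe_pow,
        Polynomial.coe_X]
    have hterm : ∀ j ∈ Finset.range (E+1),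
        PowerSeries.coeff (p*n+r)
          (PowerSeries.mk a * ((-1)^j * ((E.choose j : ℕ) : PowerSeries ℂ) * ((PowerSeries.X : PowerSeries ℂ)^p)^j))
          = (-1)^j * ((E.choose j : ℕ) : ℂ) * a (p*(n-j)+r) := by
      intro j hj
      have hjn : j ≤ n := le_trans (Nat.lt_succ_iff.mp (Finset.mem_range.mp hj)) hn
      have hrw : PowerSeries.mk a * ((-1)^j * ((E.choose j : ℕ) : PowerSeries ℂ) * ((PowerSeries.X : PowerSeries ℂ)^p)^j)
          = PowerSeries.C ((-1)^j * ((E.choose j : ℕ) : ℂ)) * (PowerSeries.mk a * (PowerSeries.X : PowerSeries ℂ)^(p*j)) := by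
        rw [← pow_mul, map_mul, map_pow, map_neg, map_one, map_natCast]
        ring
      rw [hrw, PowerSeries.coeff_C_mul, PowerSeries.coeff_mul_X_pow']
      have hle : p*j ≤ p*n + r :=
        le_trans (Nat.mul_le_mul_left p hjn) (Nat.le_add_right _ _)
      rw [if_pos hle, PowerSeries.coeff_mk]
      have harith : p*n + r - p*j = p*(n-j) + r := by
        have h1 : p*j ≤ p*n := Nat.mul_le_mul_left p hjn
        have h2 : p*(n-j) + p*j = p*n := by rw [← Nat.mul_add]; congr 1; omega
        omega
      rw [harith]
    calc ∑ j ∈ Finset.range (E+1), (-1)^j * ((E.choose j : ℕ) : ℂ) * a (p*(n-j)+r)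
        = PowerSeries.coeff (p*n+r)
          (PowerSeries.mk a * (((1 - (X : Polynomial ℂ)^p)^E : Polynomial ℂ) : PowerSeries ℂ)) := by
          rw [hcoe_expand, aux_one_sub_pow, Finset.mul_sum, map_sum]
          exact (Finset.sum_congr rfl hterm).symm
      _ = g.coeff (p*n+r) := by rw [hps, Polynomial.coeff_coe]
  -- Fact Z
  have factZ : ∀ n : ℕ, E + 1 ≤ n → ∀ r : ℕ, g.coeff (p*n+r) = 0 := by
    intro n hn r
    apply Polynomial.coeff_eq_zero_of_natDegree_lt
    calc g.natDegree < p * (E+1) := hg_deg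
      _ ≤ p * n := Nat.mul_le_mul_left p hn
      _ ≤ p * n + r := Nat.le_add_right _ _
  -- Fact 4
  have fact4 : ∑ r ∈ Finset.range p, g.coeff (p*E+r) = (-1)^E * Rpol.eval 1 := by
    have hsplitg : g = Rpol * (1 - (X : Polynomial ℂ)^p)^E + rem * h := by
      rw [hg, hdiv, ← hhden]; ring
    have hremh : ∀ r : ℕ, (rem * h).coeff (p*E + r) = 0 := by
      intro r
      by_cases hrem : rem = 0
      · simp [hrem]
      · apply Polynomial.coeff_eq_zero_of_natDegree_lt
        have h1 : rem.natDegree < den.natDegree := Polynomial.natDegree_lt_natDegree hrem hdeg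
        have h2 : (rem*h).natDegree ≤ rem.natDegree + h.natDegree := Polynomial.natDegree_mul_le
        omega
    have hRcoeff : ∀ r : ℕ, r < p →
        (Rpol * (1 - (X : Polynomial ℂ)^p)^E).coeff (p*E+r) = (-1)^E * Rpol.coeff r := by
      intro r hr
      rw [aux_one_sub_pow ((X : Polynomial ℂ)^p) E, Finset.mul_sum, Polynomial.finset_sum_coeff]
      have hc : ∀ j : ℕ, j ≤ E →
          (Rpol * ((-1)^j * ((E.choose j : ℕ) : Polynomial ℂ) * ((X : Polynomial ℂ)^p)^j)).coeff (p*E+r)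
            = (-1)^j * ((E.choose j : ℕ) : ℂ) * Rpol.coeff (p*E + r - p*j) := by
        intro j hj
        have hrw : Rpol * ((-1)^j * ((E.choose j : ℕ) : Polynomial ℂ) * ((X : Polynomial ℂ)^p)^j)
            = (Polynomial.C ((-1)^j * ((E.choose j : ℕ) : ℂ)) * Rpol) * (X : Polynomial ℂ)^(p*j) := by
          rw [← pow_mul, map_mul, map_pow, map_neg, map_one, map_natCast]
          ring
        have hle : p*j ≤ p*E + r :=
          le_trans (Nat.mul_le_mul_left p hj) (Nat.le_add_right _ _)
        rw [hrw, Polynomial.coeff_mul_X_pow', if_pos hle, Polynomial.coeff_C_mul]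
      rw [Finset.sum_eq_single_of_mem E (Finset.self_mem_range_succ E)]
      · rw [hc E le_rfl, Nat.choose_self]
        have : p*E + r - p*E = r := by omega
        rw [this]
        simp
      · intro j hj hjE
        have hjE' : j ≤ E := Nat.lt_succ_iff.mp (Finset.mem_range.mp hj)
        rw [hc j hjE']
        have hz : Rpol.coeff (p*E + r - p*j) = 0 := by
          apply Polynomial.coeff_eq_zero_of_natDegree_lt
          have hjlt : j < E := lt_of_le_of_ne hjE' hjE
          have h1 : p*j + p ≤ p*E := by
            have : j + 1 ≤ E := hjlt
            calc p*j + p = p*(j+1) := by ring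
              _ ≤ p*E := Nat.mul_le_mul_left p this
          omega
        rw [hz, mul_zero]
    have heval : ∑ r ∈ Finset.range p, Rpol.coeff r = Rpol.eval 1 := by
      rw [Polynomial.eval_eq_sum_range' hRdeg]
      simp
    calc ∑ r ∈ Finset.range p, g.coeff (p*E+r)
        = ∑ r ∈ Finset.range p, (-1)^E * Rpol.coeff r := by
          apply Finset.sum_congr rfl
          intro r hr
          rw [hsplitg, Polynomial.coeff_add, hremh r, add_zero,
            hRcoeff r (Finset.mem_range.mp hr)]
      _ = (-1)^E * Rpol.eval 1 := by rw [← Finset.mul_sum, heval]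
  -- partial sums
  set S : ℕ → ℂ := fun n => ∑ i ∈ Finset.range (p*n), a i with hS
  have hblock : ∀ n : ℕ, S (n+1) - S n = ∑ r ∈ Finset.range p, a (p*n + r) := by
    intro n
    have : p*(n+1) = p*n + p := by ring
    rw [hS]
    simp only [this, Finset.sum_range_add]
    ring
  -- recurrence
  have factR : ∀ n : ℕ, E ≤ n →
      ∑ j ∈ Finset.range (E+2), (-1)^j * (((E+1).choose j : ℕ) : ℂ) * S (n+1-j)
        = ∑ r ∈ Finset.range p, g.coeff (p*n+r) := by
    intro n hn
    rw [pascal_step E (fun j => S (n+1-j))]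
    have hterm : ∀ j ∈ Finset.range (E+1),
        (-1:ℂ)^j * ((E.choose j : ℕ) : ℂ) * (S (n+1-j) - S (n+1-(j+1)))
          = ∑ r ∈ Finset.range p, (-1:ℂ)^j * ((E.choose j : ℕ) : ℂ) * a (p*(n-j)+r) := by
      intro j hj
      have hjn : j ≤ n := le_trans (Nat.lt_succ_iff.mp (Finset.mem_range.mp hj)) hn
      have h1 : n+1-j = (n-j)+1 := by omega
      have h2 : n+1-(j+1) = n-j := by omega
      rw [h1, h2, hblock (n-j), Finset.mul_sum]
    rw [Finset.sum_congr rfl hterm, Finset.sum_comm]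
    apply Finset.sum_congr rfl
    intro r _
    exact fact1 n r hn
  -- interpolation polynomial
  set nodes : Finset ℕ := Finset.Icc 1 (E+1) with hnodes
  have hinj : Set.InjOn (fun k : ℕ => (k : ℂ)) nodes := fun x _ y _ hxy => Nat.cast_injective hxy
  set P : Polynomial ℂ := Lagrange.interpolate nodes (fun k : ℕ => (k : ℂ)) (fun k => S k) with hP
  have hnode : ∀ k ∈ nodes, P.eval ((k : ℕ) : ℂ) = S k := fun k hk =>
    Lagrange.eval_interpolate_at_node _ hinj hk
  have hcard : nodes.card = E+1 := by rw [hnodes, Nat.card_Icc]; omega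
  have hdegP : P.degree < (((E+1 : ℕ) : ℕ) : WithBot ℕ) := by
    have hlt := Lagrange.degree_interpolate_lt (r := fun k => S k) hinj
    rw [hcard] at hlt
    exact_mod_cast hlt
  -- reflected finite-difference identity for P
  have hPdiff : ∀ M : ℕ, E ≤ M →
      ∑ j ∈ Finset.range (E+2), (-1)^j * (((E+1).choose j : ℕ) : ℂ)
        * P.eval (((M+1-j : ℕ) : ℂ)) = 0 := by
    intro M hM
    have h0 := aux_findiff (E+1) P hdegP (((M - E : ℕ) : ℂ))
    have hrefl := Finset.sum_range_reflect
      (fun j => (-1:ℂ)^j * (((E+1).choose j : ℕ) : ℂ) * P.eval (((M+1-j : ℕ) : ℂ))) (E+2)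
    rw [← hrefl]
    have hcong : ∀ j ∈ Finset.range (E+2),
        (-1:ℂ)^(E+2-1-j) * (((E+1).choose (E+2-1-j) : ℕ) : ℂ)
            * P.eval (((M+1-(E+2-1-j) : ℕ) : ℂ))
          = (-1)^(E+1) * ((-1:ℂ)^j * (((E+1).choose j : ℕ) : ℂ)
            * P.eval (((M - E : ℕ) : ℂ) + j)) := by
      intro j hj
      have hj' : j ≤ E+1 := by
        have := Finset.mem_range.mp hj; omega
      have e1 : E+2-1-j = E+1-j := by omega
      have e2 : (E+1).choose (E+1-j) = (E+1).choose j := Nat.choose_symm hj'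
      have e3 : (M+1-(E+1-j) : ℕ) = (M - E) + j := by omega
      have e4 : (((M-E)+j : ℕ) : ℂ) = ((M-E : ℕ) : ℂ) + j := by push_cast; ring
      have h2j : (-1:ℂ)^j * (-1:ℂ)^j = 1 := by
        rw [← pow_add, show j+j = 2*j by omega, pow_mul]
        norm_num
      have e5 : (-1:ℂ)^(E+1-j) = (-1)^(E+1) * (-1)^j := by
        calc (-1:ℂ)^(E+1-j) = (-1)^(E+1-j) * ((-1:ℂ)^j * (-1:ℂ)^j) := by rw [h2j, mul_one]
          _ = (-1)^(E+1-j+j) * (-1)^j := by rw [← pow_add]; ring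
          _ = (-1)^(E+1) * (-1)^j := by rw [show E+1-j+j = E+1 by omega]
      rw [e1, e2, e3, e4, e5]
      ring
    rw [Finset.sum_congr rfl hcong, ← Finset.mul_sum, h0, mul_zero]
  -- main induction: S n = P.eval n for n ≥ 1
  have hSP : ∀ n : ℕ, 1 ≤ n → S n = P.eval ((n : ℕ) : ℂ) := by
    intro n
    induction n using Nat.strong_induction_on with
    | _ n ih =>
      intro hn1
      by_cases hsmall : n ≤ E+1
      · exact (hnode n (Finset.mem_Icc.mpr ⟨hn1, hsmall⟩)).symm
      · push_neg at hsmall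
        set M := n - 1 with hMdef
        have hMn : n = M + 1 := by omega
        have hME : E + 1 ≤ M := by omega
        have hrecS := factR M (by omega)
        have hzero : ∑ r ∈ Finset.range p, g.coeff (p*M+r) = 0 :=
          Finset.sum_eq_zero fun r _ => factZ M hME r
        rw [hzero] at hrecS
        have hrecP := hPdiff M (by omega)
        have hcomb : ∑ j ∈ Finset.range (E+2), (-1:ℂ)^j * (((E+1).choose j : ℕ) : ℂ)
            * (S (M+1-j) - P.eval (((M+1-j : ℕ) : ℂ))) = 0 := by
          have hsplit2 : ∑ j ∈ Finset.range (E+2), (-1:ℂ)^j * (((E+1).choose j : ℕ) : ℂ)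
              * (S (M+1-j) - P.eval (((M+1-j : ℕ) : ℂ)))
              = (∑ j ∈ Finset.range (E+2), (-1:ℂ)^j * (((E+1).choose j : ℕ) : ℂ) * S (M+1-j))
                - (∑ j ∈ Finset.range (E+2), (-1:ℂ)^j * (((E+1).choose j : ℕ) : ℂ)
                  * P.eval (((M+1-j : ℕ) : ℂ))) := by
            rw [← Finset.sum_sub_distrib]
            apply Finset.sum_congr rfl
            intro j _
            ring
          rw [hsplit2, hrecS, hrecP, sub_zero]
        rw [Finset.sum_range_succ'] at hcomb
        have hrest : ∑ j ∈ Finset.range (E+1), (-1:ℂ)^(j+1) * (((E+1).choose (j+1) : ℕ) : ℂ)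
            * (S (M+1-(j+1)) - P.eval (((M+1-(j+1) : ℕ) : ℂ))) = 0 := by
          apply Finset.sum_eq_zero
          intro j hj
          have hj' : j < E+1 := Finset.mem_range.mp hj
          have hge1 : 1 ≤ M+1-(j+1) := by omega
          have hlt : M+1-(j+1) < n := by omega
          rw [ih _ hlt hge1, sub_self, mul_zero]
        rw [hrest, zero_add] at hcomb
        simp only [pow_zero, Nat.choose_zero_right, Nat.cast_one, one_mul, Nat.sub_zero] at hcomb
        have hfin := sub_eq_zero.mp hcomb
        rw [hMn]
        exact hfin
  -- value at 0
  have hP0 : P.eval 0 = Rpol.eval 1 := by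
    have hrecS := factR E le_rfl
    rw [fact4] at hrecS
    have hrecP := hPdiff E le_rfl
    have hcomb : ∑ j ∈ Finset.range (E+2), (-1:ℂ)^j * (((E+1).choose j : ℕ) : ℂ)
        * (S (E+1-j) - P.eval (((E+1-j : ℕ) : ℂ))) = (-1)^E * Rpol.eval 1 := by
      have hsplit2 : ∑ j ∈ Finset.range (E+2), (-1:ℂ)^j * (((E+1).choose j : ℕ) : ℂ)
          * (S (E+1-j) - P.eval (((E+1-j : ℕ) : ℂ)))
          = (∑ j ∈ Finset.range (E+2), (-1:ℂ)^j * (((E+1).choose j : ℕ) : ℂ) * S (E+1-j))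
            - (∑ j ∈ Finset.range (E+2), (-1:ℂ)^j * (((E+1).choose j : ℕ) : ℂ)
              * P.eval (((E+1-j : ℕ) : ℂ))) := by
        rw [← Finset.sum_sub_distrib]
        apply Finset.sum_congr rfl
        intro j _
        ring
      rw [hsplit2, hrecS, hrecP, sub_zero]
    rw [Finset.sum_range_succ] at hcomb
    have hrest : ∑ j ∈ Finset.range (E+1), (-1:ℂ)^j * (((E+1).choose j : ℕ) : ℂ)
        * (S (E+1-j) - P.eval (((E+1-j : ℕ) : ℂ))) = 0 := by
      apply Finset.sum_eq_zero
      intro j hj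
      have hj' : j < E+1 := Finset.mem_range.mp hj
      have hmem : (E+1-j) ∈ nodes := by
        rw [hnodes, Finset.mem_Icc]
        omega
      rw [hnode _ hmem, sub_self, mul_zero]
    rw [hrest, zero_add] at hcomb
    simp only [Nat.sub_self, Nat.choose_self, Nat.cast_one, mul_one, Nat.cast_zero] at hcomb
    have hS0 : S 0 = 0 := by simp [hS]
    rw [hS0, zero_sub] at hcomb
    have hne : ((-1:ℂ)^E) ≠ 0 := pow_ne_zero _ (by norm_num)
    apply mul_left_cancel₀ hne
    linear_combination hcomb
  exact ⟨p, P, hp_pos, (fun n hn => hSP n hn), hP0⟩
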